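/- Let μ and ν be Borel probability measures on ℝ² such that all absolute moments are finite: ∫ ‖b‖^n dμ(b) < ∞ and ∫ ‖b‖^n dν(b) < ∞ for every n ∈ ℕ. Suppose the characteristic functions agree on the cone with bounded second slope, i.e. φ_μ(t, t w) = φ_ν(t, t w) for all t ∈ ℝ and all w ∈ [0, 1]. Then all mixed moments agree: for all j, k ∈ ℕ, ∫ b₀^j b₁^k dμ(b) = ∫ b₀^j b₁^k dν(b). -/

import Mathlib

open MeasureTheory Complex

namespace Stmt11Aux

lemma integrable_mixed (μ : Measure (ℝ × ℝ)) [IsProbabilityMeasure μ]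
    (hμm : ∀ n : ℕ, Integrable (fun b : ℝ × ℝ => ‖b‖ ^ n) μ) (j k : ℕ) :
    Integrable (fun b : ℝ × ℝ => b.1 ^ j * b.2 ^ k) μ := by
  refine (hμm (j + k)).mono
    ((Continuous.mul (continuous_fst.pow j) (continuous_snd.pow k)).aestronglyMeasurable)
    (Filter.Eventually.of_forall fun b => ?_)
  have h1 : |b.1| ≤ ‖b‖ := by simpa [Real.norm_eq_abs] using norm_fst_le b
  have h2 : |b.2| ≤ ‖b‖ := by simpa [Real.norm_eq_abs] using norm_snd_le b
  have hb : (0:ℝ) ≤ ‖b‖ := norm_nonneg b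
  rw [Real.norm_eq_abs, abs_mul, _root_.abs_pow, _root_.abs_pow, Real.norm_eq_abs,
    _root_.abs_of_nonneg (pow_nonneg hb _), pow_add]
  exact mul_le_mul (pow_le_pow_left₀ (abs_nonneg _) h1 j)
    (pow_le_pow_left₀ (abs_nonneg _) h2 k) (pow_nonneg (abs_nonneg _) k)
    (pow_nonneg hb j)

lemma abs_lin_le (w : ℝ) (b : ℝ × ℝ) : |b.1 + w * b.2| ≤ (1 + |w|) * ‖b‖ := by
  have h1 : |b.1| ≤ ‖b‖ := by simpa [Real.norm_eq_abs] using norm_fst_le b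
  have h2 : |b.2| ≤ ‖b‖ := by simpa [Real.norm_eq_abs] using norm_snd_le b
  calc |b.1 + w * b.2| ≤ |b.1| + |w| * |b.2| := by
        simpa [abs_mul] using abs_add_le b.1 (w * b.2)
    _ ≤ ‖b‖ + |w| * ‖b‖ := by
        gcongr
    _ = (1 + |w|) * ‖b‖ := by ring

lemma norm_term (w t : ℝ) (n : ℕ) (b : ℝ × ℝ) :
    ‖((b.1 + w * b.2 : ℝ) : ℂ) ^ n * Complex.exp (I * (t : ℂ) * ((b.1 + w * b.2 : ℝ) : ℂ))‖
      = |b.1 + w * b.2| ^ n := by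
  rw [norm_mul, norm_pow, Complex.norm_exp,
    Complex.norm_real, Real.norm_eq_abs]
  have hre : (I * (t : ℂ) * ((b.1 + w * b.2 : ℝ) : ℂ)).re = 0 := by simp
  rw [hre, Real.exp_zero, mul_one]

lemma integrable_term (μ : Measure (ℝ × ℝ)) [IsProbabilityMeasure μ]
    (hμm : ∀ n : ℕ, Integrable (fun b : ℝ × ℝ => ‖b‖ ^ n) μ) (w t : ℝ) (n : ℕ) :
    Integrable (fun b : ℝ × ℝ =>
      ((b.1 + w * b.2 : ℝ) : ℂ) ^ n * Complex.exp (I * (t : ℂ) * ((b.1 + w * b.2 : ℝ) : ℂ))) μ := by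
  have hc : Continuous (fun b : ℝ × ℝ =>
      ((b.1 + w * b.2 : ℝ) : ℂ) ^ n * Complex.exp (I * (t : ℂ) * ((b.1 + w * b.2 : ℝ) : ℂ))) := by
    fun_prop
  refine ((hμm n).const_mul ((1 + |w|) ^ n)).mono hc.aestronglyMeasurable
    (Filter.Eventually.of_forall fun b => ?_)
  rw [norm_term]
  have h0 : |b.1 + w * b.2| ^ n ≤ ((1 + |w|) * ‖b‖) ^ n :=
    pow_le_pow_left₀ (abs_nonneg _) (abs_lin_le w b) n
  calc |b.1 + w * b.2| ^ n ≤ (1 + |w|) ^ n * ‖b‖ ^ n := by rwa [mul_pow] at h0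
    _ ≤ ‖(1 + |w|) ^ n * ‖b‖ ^ n‖ := le_abs_self _

lemma hasDerivAt_F (μ : Measure (ℝ × ℝ)) [IsProbabilityMeasure μ]
    (hμm : ∀ n : ℕ, Integrable (fun b : ℝ × ℝ => ‖b‖ ^ n) μ) (w : ℝ) (n : ℕ) (t : ℝ) :
    HasDerivAt (fun s : ℝ => ∫ b : ℝ × ℝ,
        ((b.1 + w * b.2 : ℝ) : ℂ) ^ n * Complex.exp (I * (s : ℂ) * ((b.1 + w * b.2 : ℝ) : ℂ)) ∂μ)
      (I * ∫ b : ℝ × ℝ,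
        ((b.1 + w * b.2 : ℝ) : ℂ) ^ (n + 1)
          * Complex.exp (I * (t : ℂ) * ((b.1 + w * b.2 : ℝ) : ℂ)) ∂μ) t := by
  set x : ℝ × ℝ → ℝ := fun b => b.1 + w * b.2 with hx
  have key := hasDerivAt_integral_of_dominated_loc_of_deriv_le
    (F := fun (s : ℝ) (b : ℝ × ℝ) => ((x b : ℝ) : ℂ) ^ n * Complex.exp (I * (s : ℂ) * ((x b : ℝ) : ℂ)))
    (F' := fun (s : ℝ) (b : ℝ × ℝ) =>
      I * (((x b : ℝ) : ℂ) ^ (n + 1) * Complex.exp (I * (s : ℂ) * ((x b : ℝ) : ℂ))))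
    (bound := fun b => (1 + |w|) ^ (n + 1) * ‖b‖ ^ (n + 1))
    (μ := μ) (x₀ := t) (s := Metric.ball t 1) (Metric.ball_mem_nhds t one_pos)
    (Filter.Eventually.of_forall fun s => (integrable_term μ hμm w s n).aestronglyMeasurable)
    (integrable_term μ hμm w t n)
    (((integrable_term μ hμm w t (n + 1)).const_mul I).aestronglyMeasurable)
    (Filter.Eventually.of_forall fun b s _ => ?_)
    ((hμm (n + 1)).const_mul _)
    (Filter.Eventually.of_forall fun b s _ => ?_)
  · have := key.2
    rwa [integral_const_mul] at this
  · -- bound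
    rw [norm_mul, Complex.norm_I, one_mul, norm_term]
    have h0 : |x b| ^ (n+1) ≤ ((1 + |w|) * ‖b‖) ^ (n+1) :=
      pow_le_pow_left₀ (abs_nonneg _) (abs_lin_le w b) (n+1)
    rwa [mul_pow] at h0
  · -- derivative pointwise
    set c : ℂ := ((x b : ℝ) : ℂ) with hc
    have h1 : HasDerivAt (fun z : ℂ => I * z * c) (I * c) s := by
      simpa using ((hasDerivAt_id (s : ℂ)).const_mul I).mul_const c
    have h2 : HasDerivAt (fun z : ℂ => Complex.exp (I * z * c))
        (Complex.exp (I * (s : ℂ) * c) * (I * c)) (s : ℂ) := h1.cexp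
    have h3 : HasDerivAt (fun u : ℝ => Complex.exp (I * (u : ℂ) * c))
        (Complex.exp (I * (s : ℂ) * c) * (I * c)) s := h2.comp_ofReal
    have h4 := h3.const_mul (c ^ n)
    convert h4 using 1
    · rfl
    · ring

lemma lin_moments_eq (μ ν : Measure (ℝ × ℝ)) [IsProbabilityMeasure μ] [IsProbabilityMeasure ν]
    (hμm : ∀ n : ℕ, Integrable (fun b : ℝ × ℝ => ‖b‖ ^ n) μ)
    (hνm : ∀ n : ℕ, Integrable (fun b : ℝ × ℝ => ‖b‖ ^ n) ν)
    (h : ∀ t : ℝ, ∀ w ∈ Set.Icc (0 : ℝ) 1,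
      ∫ b : ℝ × ℝ, Complex.exp (Complex.I * ((t * b.1 + (t * w) * b.2 : ℝ) : ℂ)) ∂μ
        = ∫ b : ℝ × ℝ, Complex.exp (Complex.I * ((t * b.1 + (t * w) * b.2 : ℝ) : ℂ)) ∂ν)
    (w : ℝ) (hw : w ∈ Set.Icc (0 : ℝ) 1) (n : ℕ) :
    ∫ b : ℝ × ℝ, (b.1 + w * b.2) ^ n ∂μ = ∫ b : ℝ × ℝ, (b.1 + w * b.2) ^ n ∂ν := by
  have key : ∀ n : ℕ, ∀ t : ℝ,
      (∫ b : ℝ × ℝ, ((b.1 + w * b.2 : ℝ) : ℂ) ^ n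
          * Complex.exp (I * (t : ℂ) * ((b.1 + w * b.2 : ℝ) : ℂ)) ∂μ)
        = ∫ b : ℝ × ℝ, ((b.1 + w * b.2 : ℝ) : ℂ) ^ n
          * Complex.exp (I * (t : ℂ) * ((b.1 + w * b.2 : ℝ) : ℂ)) ∂ν := by
    intro n
    induction n with
    | zero =>
      intro t
      have hform : ∀ (κ : Measure (ℝ × ℝ)),
          (∫ b : ℝ × ℝ, ((b.1 + w * b.2 : ℝ) : ℂ) ^ 0
              * Complex.exp (I * (t : ℂ) * ((b.1 + w * b.2 : ℝ) : ℂ)) ∂κ)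
            = ∫ b : ℝ × ℝ, Complex.exp (Complex.I * ((t * b.1 + (t * w) * b.2 : ℝ) : ℂ)) ∂κ := by
        intro κ
        congr 1
        funext b
        rw [pow_zero, one_mul]
        congr 1
        push_cast
        ring
      rw [hform μ, hform ν]
      exact h t w hw
    | succ n ih =>
      intro t
      have hμd := hasDerivAt_F μ hμm w n t
      have hνd := hasDerivAt_F ν hνm w n t
      have heq : (fun s : ℝ => ∫ b : ℝ × ℝ, ((b.1 + w * b.2 : ℝ) : ℂ) ^ n
            * Complex.exp (I * (s : ℂ) * ((b.1 + w * b.2 : ℝ) : ℂ)) ∂μ)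
          = (fun s : ℝ => ∫ b : ℝ × ℝ, ((b.1 + w * b.2 : ℝ) : ℂ) ^ n
            * Complex.exp (I * (s : ℂ) * ((b.1 + w * b.2 : ℝ) : ℂ)) ∂ν) := funext ih
      rw [heq] at hμd
      exact mul_left_cancel₀ I_ne_zero (hμd.unique hνd)
  have h0 := key n 0
  simp only [Complex.ofReal_zero, mul_zero, zero_mul, Complex.exp_zero, mul_one] at h0
  have hμ0 : (∫ b : ℝ × ℝ, ((b.1 + w * b.2 : ℝ) : ℂ) ^ n ∂μ)
      = ((∫ b : ℝ × ℝ, (b.1 + w * b.2) ^ n ∂μ : ℝ) : ℂ) := by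
    simp_rw [← Complex.ofReal_pow]
    exact integral_ofReal
  have hν0 : (∫ b : ℝ × ℝ, ((b.1 + w * b.2 : ℝ) : ℂ) ^ n ∂ν)
      = ((∫ b : ℝ × ℝ, (b.1 + w * b.2) ^ n ∂ν : ℝ) : ℂ) := by
    simp_rw [← Complex.ofReal_pow]
    exact integral_ofReal
  rw [hμ0, hν0] at h0
  exact_mod_cast h0

lemma expand (μ : Measure (ℝ × ℝ)) [IsProbabilityMeasure μ]
    (hμm : ∀ n : ℕ, Integrable (fun b : ℝ × ℝ => ‖b‖ ^ n) μ) (w : ℝ) (n : ℕ) :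
    ∫ b : ℝ × ℝ, (b.1 + w * b.2) ^ n ∂μ
      = ∑ k ∈ Finset.range (n + 1),
          ((n.choose k : ℝ) * ∫ b : ℝ × ℝ, b.1 ^ k * b.2 ^ (n - k) ∂μ) * w ^ (n - k) := by
  have hpt : ∀ b : ℝ × ℝ, (b.1 + w * b.2) ^ n
      = ∑ k ∈ Finset.range (n + 1),
          ((n.choose k : ℝ) * w ^ (n - k)) * (b.1 ^ k * b.2 ^ (n - k)) := by
    intro b
    rw [add_pow]
    refine Finset.sum_congr rfl fun k _ => ?_
    rw [mul_pow]
    ring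
  simp_rw [hpt]
  rw [integral_finset_sum _ (fun k _ => (integrable_mixed μ hμm k (n - k)).const_mul _)]
  refine Finset.sum_congr rfl fun k _ => ?_
  rw [integral_const_mul]
  ring

end Stmt11Aux

open Stmt11Aux in
/-- Moment matching from agreement of characteristic functions on the cone with slopes in
`[0,1]`: if two probability measures on `ℝ²` with all absolute moments finite satisfy
`φ_μ(t, tw) = φ_ν(t, tw)` for all `t ∈ ℝ` and `w ∈ [0,1]`, then all mixed moments agree. -/
theorem stmt_11 (μ ν : Measure (ℝ × ℝ)) [IsProbabilityMeasure μ] [IsProbabilityMeasure ν]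
    (hμm : ∀ n : ℕ, Integrable (fun b : ℝ × ℝ => ‖b‖ ^ n) μ)
    (hνm : ∀ n : ℕ, Integrable (fun b : ℝ × ℝ => ‖b‖ ^ n) ν)
    (h : ∀ t : ℝ, ∀ w ∈ Set.Icc (0 : ℝ) 1,
      ∫ b : ℝ × ℝ, Complex.exp (Complex.I * ((t * b.1 + (t * w) * b.2 : ℝ) : ℂ)) ∂μ
        = ∫ b : ℝ × ℝ, Complex.exp (Complex.I * ((t * b.1 + (t * w) * b.2 : ℝ) : ℂ)) ∂ν) :
    ∀ j k : ℕ, ∫ b : ℝ × ℝ, b.1 ^ j * b.2 ^ k ∂μ = ∫ b : ℝ × ℝ, b.1 ^ j * b.2 ^ k ∂ν := by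
  intro j k
  set n : ℕ := j + k with hn
  set c : ℕ → ℝ := fun i =>
    (n.choose i : ℝ) * ((∫ b : ℝ × ℝ, b.1 ^ i * b.2 ^ (n - i) ∂μ)
      - ∫ b : ℝ × ℝ, b.1 ^ i * b.2 ^ (n - i) ∂ν) with hc
  have hvanish : ∀ w ∈ Set.Icc (0 : ℝ) 1,
      ∑ i ∈ Finset.range (n + 1), c i * w ^ (n - i) = 0 := by
    intro w hw
    have h1 := expand μ hμm w n
    have h2 := expand ν hνm w n
    have h3 := lin_moments_eq μ ν hμm hνm h w hw n
    have : ∑ i ∈ Finset.range (n + 1), c i * w ^ (n - i)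
        = (∫ b : ℝ × ℝ, (b.1 + w * b.2) ^ n ∂μ) - ∫ b : ℝ × ℝ, (b.1 + w * b.2) ^ n ∂ν := by
      rw [h1, h2, ← Finset.sum_sub_distrib]
      refine Finset.sum_congr rfl fun i _ => ?_
      simp only [hc]
      ring
    rw [this, h3, sub_self]
  set p : Polynomial ℝ :=
    ∑ i ∈ Finset.range (n + 1), Polynomial.C (c (n - i)) * Polynomial.X ^ i with hp
  have hroot : ∀ w ∈ Set.Icc (0 : ℝ) 1, p.IsRoot w := by
    intro w hw
    have hv := hvanish w hw
    have heval : p.eval w = ∑ i ∈ Finset.range (n + 1), c (n - i) * w ^ i := by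
      simp [hp, Polynomial.eval_finset_sum]
    rw [Polynomial.IsRoot, heval]
    have hrefl := Finset.sum_range_reflect (fun i => c i * w ^ (n - i)) (n + 1)
    rw [← hrefl] at hv
    rw [← hv]
    refine Finset.sum_congr rfl fun i hi => ?_
    have hi' : i ≤ n := Nat.lt_succ_iff.mp (Finset.mem_range.mp hi)
    rw [Nat.add_sub_cancel, Nat.sub_sub_self hi']
  have hpz : p = 0 := by
    refine Polynomial.eq_zero_of_infinite_isRoot p ?_
    exact Set.Infinite.mono (fun x hx => hroot x hx) (Set.Icc_infinite (by norm_num : (0:ℝ) < 1))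
  have hcoeff : p.coeff k = c (n - k) := by
    rw [hp]
    rw [Polynomial.finset_sum_coeff]
    simp only [Polynomial.coeff_C_mul, Polynomial.coeff_X_pow, mul_ite, mul_one, mul_zero]
    rw [Finset.sum_ite_eq (Finset.range (n + 1)) k (fun i => c (n - i))]
    rw [if_pos (Finset.mem_range.mpr (by omega))]
  have hck : c (n - k) = 0 := by rw [← hcoeff, hpz, Polynomial.coeff_zero]
  have hnk : n - k = j := by omega
  rw [hnk] at hck
  have hchoose : (n.choose j : ℝ) ≠ 0 :=
    Nat.cast_ne_zero.mpr (Nat.choose_pos (by omega : j ≤ n)).ne'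
  have hkj : n - j = k := by omega
  simp only [hc, hkj] at hck
  rcases mul_eq_zero.mp hck with h' | h'
  · exact absurd h' hchoose
  · linarith [sub_eq_zero.mp h']
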